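/- Any hash function family indexed by seeds of bit-length s, mapping binary strings of length m to outputs of bit-length o, with the property that for every pair of distinct inputs there exists a seed on which they hash differently (i.e., collision probability strictly less than 1 under a uniformly random seed), must satisfy 2^s ≥ m / o. -/
import Mathlib


/-- Any hash family `h : {0,1}^s × {0,1}^m → {0,1}^o` such that every pair of
distinct inputs is distinguished by some seed must satisfy `2^s ≥ m / o`,
equivalently `m ≤ o · 2^s`. -/
theorem hash_seed_length_lower_bound (s m o : ℕ)
    (h : (Fin s → Bool) → (Fin m → Bool) → (Fin o → Bool))
    (hcoll : ∀ x y : Fin m → Bool, x ≠ y → ∃ S : Fin s → Bool, h S x ≠ h S y) :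
    m ≤ o * 2 ^ s := by
  have hinj : Function.Injective (fun x : Fin m → Bool => fun S => h S x) := by
    intro x y hxy
    by_contra hne
    obtain ⟨S, hS⟩ := hcoll x y hne
    exact hS (congrFun hxy S)
  have hcard := Fintype.card_le_of_injective _ hinj
  simp only [Fintype.card_fun, Fintype.card_bool, Fintype.card_fin] at hcard
  have : 2 ^ m ≤ 2 ^ (o * 2 ^ s) := by
    calc 2 ^ m ≤ (2 ^ o) ^ (2 ^ s) := hcard
    _ = 2 ^ (o * 2 ^ s) := by rw [← pow_mul]
  exact (Nat.pow_le_pow_iff_right (by norm_num)).mp this
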